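/- Let (H_t) be a scalar 𝒢-adapted integrable process. Then for every t ≥ 0 and every 1 ≤ r ≤ N, P̄-almost surely, Ē[Λ̄_{t+1} H_t ⟨X_t, e_r⟩ | 𝒴_{t+1}] = ⟨γ_t(H_t X_t), Γ^r(Y_{t+1})⟩; consequently, summing over r, Ē[Λ̄_{t+1} H_t | 𝒴_{t+1}] = Σ_{i=1}^{N} ⟨γ_t(H_t X_t), Γ^i(Y_{t+1})⟩. -/

import Mathlib

open MeasureTheory ProbabilityTheory Finset Matrix

noncomputable section

/-- Standard normal density `φ`. -/
def stdPDF (u : ℝ) : ℝ := (Real.sqrt (2 * Real.pi))⁻¹ * Real.exp (-u ^ 2 / 2)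

/-- `𝒴_t`, the σ-field generated by the observations `Y_s`, `s ≤ t`. -/
def sigY {Ω : Type*} (Y : ℤ → Ω → ℝ) (t : ℕ) : MeasurableSpace Ω :=
  ⨆ s : {s : ℤ // s ≤ (t : ℤ)}, MeasurableSpace.comap (Y s.1) inferInstance

/-- `ℱ_t`, the σ-field generated by the hidden states `X_0, …, X_t`. -/
def sigF {Ω : Type*} {N : ℕ} (X : ℕ → Ω → Fin N → ℝ) (t : ℕ) : MeasurableSpace Ω :=
  ⨆ s : Fin (t + 1), MeasurableSpace.comap (X s.1) inferInstance

/-- `𝒢_t`, the σ-field generated by `X_0, …, X_t` and the observations up to time `t`. -/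
def sigG {Ω : Type*} {N : ℕ} (X : ℕ → Ω → Fin N → ℝ) (Y : ℤ → Ω → ℝ) (t : ℕ) :
    MeasurableSpace Ω := sigF X t ⊔ sigY Y t

/-- The vector `(Y_t, Y_{t-1}, …, Y_{t-p+1})` of the `p` last observations. -/
def past {Ω : Type*} (Y : ℤ → Ω → ℝ) (p : ℕ) (t : ℤ) (ω : Ω) : Fin p → ℝ :=
  fun k => Y (t - (k : ℤ)) ω

/-- `Λ_t = ∏_{l=1}^t λ_l`, with `λ_{l+1} = ⟨σ, X_l⟩ φ(Y_{l+1}) / φ(ε_{l+1})` and `Λ_0 = 1`. -/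
def Lam {Ω : Type*} {N : ℕ} (X : ℕ → Ω → Fin N → ℝ) (Y : ℤ → Ω → ℝ) (ε : ℕ → Ω → ℝ)
    (σv : Fin N → ℝ) (t : ℕ) (ω : Ω) : ℝ :=
  ∏ l ∈ Finset.range t,
    (∑ i, σv i * X l ω i) * stdPDF (Y ((l : ℤ) + 1) ω) / stdPDF (ε (l + 1) ω)

/-- `Γ^i(Y_{t+1}) = φ((Y_{t+1} − F_{e_i}(Y_{t−p+1},…,Y_t))/σ_{e_i}) / (σ_{e_i} φ(Y_{t+1}))`. -/
def Gam {Ω : Type*} {N p : ℕ} (Y : ℤ → Ω → ℝ) (F : Fin N → (Fin p → ℝ) → ℝ)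
    (σv : Fin N → ℝ) (i : Fin N) (t : ℕ) (ω : Ω) : ℝ :=
  stdPDF ((Y ((t : ℤ) + 1) ω - F i (past Y p t ω)) / σv i) /
    (σv i * stdPDF (Y ((t : ℤ) + 1) ω))

open scoped ENNReal NNReal
set_option linter.unusedSectionVars false
set_option maxHeartbeats 1000000
section AuxHMM
lemma stdPDF_pos (u : ℝ) : 0 < stdPDF u := by unfold stdPDF; positivity
lemma continuous_stdPDF : Continuous stdPDF := by unfold stdPDF; fun_prop
lemma measurable_stdPDF : Measurable stdPDF := continuous_stdPDF.measurable
lemma stdPDF_eq_gaussian (x : ℝ) : gaussianPDFReal 0 1 x = stdPDF x := by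
  unfold gaussianPDFReal stdPDF; norm_num

section Sig
variable {Ω : Type*} [mΩ : MeasurableSpace Ω] {N p : ℕ}
  {X : ℕ → Ω → Fin N → ℝ} {Y : ℤ → Ω → ℝ} {ε : ℕ → Ω → ℝ}
  {F : Fin N → (Fin p → ℝ) → ℝ} {σv : Fin N → ℝ}

lemma measurable_Y_sigY {t : ℕ} {s : ℤ} (hs : s ≤ (t : ℤ)) : Measurable[sigY Y t] (Y s) := by
  have h : MeasurableSpace.comap (Y s) inferInstance ≤ sigY Y t :=
    le_iSup (fun s : {s : ℤ // s ≤ (t : ℤ)} =>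
      MeasurableSpace.comap (Y s.1) inferInstance) ⟨s, hs⟩
  exact fun u hu => h _ ⟨u, hu, rfl⟩

lemma comap_le_sigY {t : ℕ} {s : ℤ} (hs : s ≤ (t : ℤ)) :
    MeasurableSpace.comap (Y s) inferInstance ≤ sigY Y t :=
  le_iSup (fun s : {s : ℤ // s ≤ (t : ℤ)} =>
    MeasurableSpace.comap (Y s.1) inferInstance) ⟨s, hs⟩

lemma measurable_X_sigF {t : ℕ} {l : ℕ} (hl : l ≤ t) : Measurable[sigF X t] (X l) := by
  have h : MeasurableSpace.comap (X l) inferInstance ≤ sigF X t :=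
    le_iSup (fun s : Fin (t + 1) => MeasurableSpace.comap (X s.1) inferInstance)
      ⟨l, by omega⟩
  exact fun u hu => h _ ⟨u, hu, rfl⟩

lemma sigY_mono {s t : ℕ} (h : s ≤ t) : sigY Y s ≤ sigY Y t :=
  iSup_le fun u => comap_le_sigY (u.2.trans (by exact_mod_cast h))

lemma sigY_le (hYm : ∀ s, Measurable (Y s)) (t : ℕ) : sigY Y t ≤ mΩ :=
  iSup_le fun s => (hYm s.1).comap_le

lemma sigF_mono {s t : ℕ} (h : s ≤ t) : sigF X s ≤ sigF X t :=
  iSup_le fun u => le_iSup (fun s : Fin (t + 1) =>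
    MeasurableSpace.comap (X s.1) inferInstance) ⟨u.1, by omega⟩

lemma sigF_le (hXm : ∀ t, Measurable (X t)) (t : ℕ) : sigF X t ≤ mΩ :=
  iSup_le fun s => (hXm s.1).comap_le

lemma sigG_le (hXm : ∀ t, Measurable (X t)) (hYm : ∀ s, Measurable (Y s)) (t : ℕ) :
    sigG X Y t ≤ mΩ := sup_le (sigF_le hXm t) (sigY_le hYm t)

lemma sigG_mono {s t : ℕ} (h : s ≤ t) : sigG X Y s ≤ sigG X Y t :=
  sup_le ((sigF_mono h).trans le_sup_left) ((sigY_mono h).trans le_sup_right)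

lemma measurable_Y_sigG {t : ℕ} {s : ℤ} (hs : s ≤ (t : ℤ)) : Measurable[sigG X Y t] (Y s) :=
  (measurable_Y_sigY hs).mono le_sup_right le_rfl

lemma measurable_X_sigG {t : ℕ} {l : ℕ} (hl : l ≤ t) : Measurable[sigG X Y t] (X l) :=
  (measurable_X_sigF hl).mono le_sup_left le_rfl

lemma measurable_past_sigY {t : ℕ} : Measurable[sigY Y t] (past Y p (t : ℤ)) := by
  letI : MeasurableSpace Ω := sigY Y t
  refine measurable_pi_lambda _ fun k => measurable_Y_sigY ?_
  have : (0 : ℤ) ≤ (k : ℤ) := Int.ofNat_nonneg _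
  omega

lemma continuous_F (hFaff : ∀ i, ∃ (L : (Fin p → ℝ) →ₗ[ℝ] ℝ) (c : ℝ), ∀ v, F i v = L v + c)
    (i : Fin N) : Continuous (F i) := by
  obtain ⟨L, c, hL⟩ := hFaff i
  have : F i = fun v => L v + c := funext hL
  rw [this]
  exact (L.continuous_of_finiteDimensional).add continuous_const

lemma sigY_succ (Y : ℤ → Ω → ℝ) (t : ℕ) :
    sigY Y (t + 1) = sigY Y t ⊔ MeasurableSpace.comap (Y ((t : ℤ) + 1)) inferInstance := by
  refine le_antisymm (iSup_le fun s => ?_) (sup_le (sigY_mono (Nat.le_succ t)) ?_)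
  · rcases lt_or_eq_of_le s.2 with h | h
    · have hs : s.1 ≤ (t : ℤ) := by push_cast at h ⊢; omega
      exact (comap_le_sigY hs).trans le_sup_left
    · have : s.1 = (t : ℤ) + 1 := by push_cast at h; omega
      rw [this]
      exact le_sup_right
  · exact comap_le_sigY (by push_cast; omega)
end Sig

section Lam
variable {Ω : Type*} [mΩ : MeasurableSpace Ω] {N p : ℕ}
  {X : ℕ → Ω → Fin N → ℝ} {Y : ℤ → Ω → ℝ} {ε : ℕ → Ω → ℝ}
  {F : Fin N → (Fin p → ℝ) → ℝ} {σv : Fin N → ℝ}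

lemma single_sum_left (g : Fin N → ℝ) (i : Fin N) :
    (∑ j, g j * (Pi.single i 1 : Fin N → ℝ) j) = g i := by
  simp [Pi.single_apply, mul_ite, mul_one, mul_zero]

lemma single_sum_right (g : Fin N → ℝ) (i : Fin N) :
    (∑ j, (Pi.single i 1 : Fin N → ℝ) j * g j) = g i := by
  simp [Pi.single_apply, ite_mul, one_mul, zero_mul]

/-- `Λ` with `ε` expressed through `Y` (a `𝒢ₜ`-measurable version). -/
def LamY (X : ℕ → Ω → Fin N → ℝ) (Y : ℤ → Ω → ℝ) (F : Fin N → (Fin p → ℝ) → ℝ)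
    (σv : Fin N → ℝ) (t : ℕ) (ω : Ω) : ℝ :=
  ∏ l ∈ Finset.range t,
    (∑ i, σv i * X l ω i) * stdPDF (Y ((l : ℤ) + 1) ω) /
      stdPDF ((Y ((l : ℤ) + 1) ω - ∑ i, X l ω i * F i (past Y p (l : ℤ) ω)) /
        (∑ i, X l ω i * σv i))

variable (hσ : ∀ i, 0 < σv i)
  (hXb : ∀ t ω, ∃ i, X t ω = Pi.single i 1)
  (hdyn : ∀ (t : ℕ) (ω : Ω), Y ((t : ℤ) + 1) ω =
    (∑ i, X t ω i * F i (past Y p ((t : ℤ)) ω)) + (∑ i, X t ω i * σv i) * ε (t + 1) ω)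

include hσ hXb in
lemma sfun_pos (t : ℕ) (ω : Ω) : 0 < ∑ i, X t ω i * σv i := by
  obtain ⟨i, hi⟩ := hXb t ω
  rw [hi, single_sum_right]
  exact hσ i

include hσ hXb in
lemma sfun_pos' (t : ℕ) (ω : Ω) : 0 < ∑ i, σv i * X t ω i := by
  obtain ⟨i, hi⟩ := hXb t ω
  rw [hi, single_sum_left]
  exact hσ i

include hσ hXb hdyn in
lemma eps_eq (t : ℕ) (ω : Ω) :
    ε (t + 1) ω = (Y ((t : ℤ) + 1) ω - ∑ i, X t ω i * F i (past Y p (t : ℤ) ω)) /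
      (∑ i, X t ω i * σv i) := by
  have hs := sfun_pos hσ hXb t ω
  rw [hdyn t ω]
  field_simp
  ring

include hσ hXb hdyn in
lemma LamY_eq (t : ℕ) (ω : Ω) : LamY X Y F σv t ω = Lam X Y ε σv t ω := by
  unfold LamY Lam
  refine Finset.prod_congr rfl fun l _ => ?_
  rw [eps_eq hσ hXb hdyn l ω]

include hσ hXb in
lemma Lam_pos (t : ℕ) (ω : Ω) : 0 < Lam X Y ε σv t ω := by
  unfold Lam
  refine Finset.prod_pos fun l _ => ?_
  exact div_pos (mul_pos (sfun_pos' hσ hXb l ω) (stdPDF_pos _)) (stdPDF_pos _)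

lemma measurable_LamY (hFaff : ∀ i, ∃ (L : (Fin p → ℝ) →ₗ[ℝ] ℝ) (c : ℝ), ∀ v, F i v = L v + c)
    (t : ℕ) : Measurable[sigG X Y t] (LamY X Y F σv t) := by
  letI : MeasurableSpace Ω := sigG X Y t
  unfold LamY
  refine Finset.measurable_prod _ fun l hl => ?_
  have hl' : l ≤ t := le_of_lt (Finset.mem_range.mp hl)
  have hl1 : ((l : ℤ) + 1) ≤ (t : ℤ) := by exact_mod_cast Nat.succ_le_of_lt (Finset.mem_range.mp hl)
  have hXl : Measurable[sigG X Y t] (X l) := measurable_X_sigG hl'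
  have hYl : Measurable[sigG X Y t] (Y ((l : ℤ) + 1)) := measurable_Y_sigG hl1
  have hpast : Measurable[sigG X Y t] (past Y p (l : ℤ)) :=
    ((measurable_past_sigY (t := l)).mono (sigY_mono hl') le_rfl).mono le_sup_right le_rfl
  refine Measurable.div ?_ ?_
  · exact (Finset.measurable_sum _ fun i _ =>
      (measurable_const.mul ((measurable_pi_apply i).comp hXl))).mul
      (measurable_stdPDF.comp hYl)
  · refine measurable_stdPDF.comp (Measurable.div (Measurable.sub hYl ?_) ?_)
    · exact Finset.measurable_sum _ fun i _ =>
        ((measurable_pi_apply i).comp hXl).mul ((continuous_F hFaff i).measurable.comp hpast)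
    · exact Finset.measurable_sum _ fun i _ =>
        ((measurable_pi_apply i).comp hXl).mul measurable_const

lemma measurable_Lam (hXm : ∀ t, Measurable (X t)) (hYm : ∀ s, Measurable (Y s))
    (hεm : ∀ t, Measurable (ε t)) (t : ℕ) : Measurable (Lam X Y ε σv t) := by
  unfold Lam
  refine Finset.measurable_prod _ fun l hl => ?_
  exact ((Finset.measurable_sum _ fun i _ =>
    measurable_const.mul ((hXm l).eval)).mul (measurable_stdPDF.comp (hYm _))).div
    (measurable_stdPDF.comp (hεm _))

include hσ hXb hdyn in
lemma key_pointwise (H : Ω → ℝ) (t : ℕ) (r : Fin N) (ω : Ω) :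
    (Lam X Y ε σv (t + 1) ω)⁻¹ * H ω * X t ω r =
      ((Lam X Y ε σv t ω)⁻¹ * H ω * X t ω r) * Gam Y F σv r t ω := by
  obtain ⟨i, hi⟩ := hXb t ω
  by_cases hir : i = r
  · subst hir
    have hXr : X t ω i = 1 := by rw [hi]; simp
    have hsum1 : (∑ j, σv j * X t ω j) = σv i := by rw [hi, single_sum_left]
    have hsum2 : (∑ j, X t ω j * σv j) = σv i := by rw [hi, single_sum_right]
    have hsum3 : (∑ j, X t ω j * F j (past Y p (t : ℤ) ω)) =
        F i (past Y p (t : ℤ) ω) := by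
      rw [hi, single_sum_right (fun j => F j (past Y p (t : ℤ) ω))]
    have heps : ε (t + 1) ω =
        (Y ((t : ℤ) + 1) ω - F i (past Y p (t : ℤ) ω)) / σv i := by
      rw [eps_eq hσ hXb hdyn t ω, hsum3, hsum2]
    have hLam : Lam X Y ε σv (t + 1) ω = Lam X Y ε σv t ω *
        (σv i * stdPDF (Y ((t : ℤ) + 1) ω) / stdPDF (ε (t + 1) ω)) := by
      unfold Lam
      rw [Finset.prod_range_succ, hsum1]
    have hGam : Gam Y F σv i t ω =
        stdPDF (ε (t + 1) ω) / (σv i * stdPDF (Y ((t : ℤ) + 1) ω)) := by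
      unfold Gam
      rw [heps]
    rw [hLam, hGam, hXr, mul_inv]
    have h1 : stdPDF (ε (t + 1) ω) ≠ 0 := (stdPDF_pos _).ne'
    have h2 : σv i * stdPDF (Y ((t : ℤ) + 1) ω) ≠ 0 :=
      (mul_pos (hσ i) (stdPDF_pos _)).ne'
    rw [inv_div]
    ring
  · have hXr : X t ω r = 0 := by
      rw [hi, Pi.single_apply]
      simp [Ne.symm hir]
    rw [hXr]
    ring

include hXb in
lemma sum_pointwise (H : Ω → ℝ) (t : ℕ) (c : Ω → ℝ) (ω : Ω) :
    c ω * H ω = ∑ r, c ω * H ω * X t ω r := by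
  obtain ⟨i, hi⟩ := hXb t ω
  rw [← Finset.mul_sum, hi]
  simp
end Lam



lemma sup_eq_generateFrom_inter {Ω : Type*} (m₁ m₂ : MeasurableSpace Ω) :
    m₁ ⊔ m₂ = MeasurableSpace.generateFrom
      {s | ∃ s₁ s₂, MeasurableSet[m₁] s₁ ∧ MeasurableSet[m₂] s₂ ∧ s = s₁ ∩ s₂} := by
  refine le_antisymm (sup_le ?_ ?_) (MeasurableSpace.generateFrom_le ?_)
  · intro s hs
    exact MeasurableSpace.measurableSet_generateFrom ⟨s, Set.univ, hs, MeasurableSet.univ,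
      (Set.inter_univ s).symm⟩
  · intro s hs
    exact MeasurableSpace.measurableSet_generateFrom ⟨Set.univ, s, MeasurableSet.univ, hs,
      (Set.univ_inter s).symm⟩
  · rintro s ⟨s₁, s₂, h₁, h₂, rfl⟩
    exact MeasurableSet.inter ((le_sup_left : m₁ ≤ m₁ ⊔ m₂) _ h₁)
      ((le_sup_right : m₂ ≤ m₁ ⊔ m₂) _ h₂)

lemma isPiSystem_inter_sets {Ω : Type*} (m₁ m₂ : MeasurableSpace Ω) :
    IsPiSystem {s | ∃ s₁ s₂, MeasurableSet[m₁] s₁ ∧ MeasurableSet[m₂] s₂ ∧ s = s₁ ∩ s₂} := by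
  rintro s ⟨s₁, s₂, h₁, h₂, rfl⟩ u ⟨u₁, u₂, g₁, g₂, rfl⟩ -
  exact ⟨s₁ ∩ u₁, s₂ ∩ u₂, h₁.inter g₁, h₂.inter g₂, by rw [Set.inter_inter_inter_comm]⟩

/-- Tower property over a join with an independent σ-algebra. -/
lemma condexp_sup_indep {Ω : Type*} {m₁ m₂ mG : MeasurableSpace Ω}
    {m0 : MeasurableSpace Ω} {μ : Measure Ω} [IsProbabilityMeasure μ]
    (hG : mG ≤ m0) (h₁G : m₁ ≤ mG) (h₂ : m₂ ≤ m0) {f : Ω → ℝ}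
    (hf : StronglyMeasurable[mG] f) (hfi : Integrable f μ)
    (hindep : Indep mG m₂ μ) :
    μ[f | m₁ ⊔ m₂] =ᵐ[μ] μ[f | m₁] := by
  have h₁ : m₁ ≤ m0 := h₁G.trans hG
  have hm : m₁ ⊔ m₂ ≤ m0 := sup_le h₁ h₂
  refine (ae_eq_condExp_of_forall_setIntegral_eq hm hfi
    (fun s _ _ => integrable_condExp.integrableOn) (fun s hs _ => ?_)
    (((stronglyMeasurable_condExp (m := m₁) (μ := μ) (f := f)).mono (le_sup_left (b := m₂))).aestronglyMeasurable (μ := μ))).symm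
  have key : ∀ ⦃s : Set Ω⦄, MeasurableSet[m₁ ⊔ m₂] s →
      ∫ x in s, f x ∂μ = ∫ x in s, (μ[f|m₁]) x ∂μ := by
    refine @MeasurableSpace.induction_on_inter Ω (m₁ ⊔ m₂)
      (fun s _ => ∫ x in s, f x ∂μ = ∫ x in s, (μ[f|m₁]) x ∂μ) _
      (sup_eq_generateFrom_inter m₁ m₂) (isPiSystem_inter_sets m₁ m₂) (by simp) ?_ ?_ ?_
    · rintro s ⟨s₁, s₂, h₁s, h₂s, rfl⟩
      have hms : MeasurableSet (s₁ ∩ s₂) := (hG _ (h₁G _ h₁s)).inter (h₂ _ h₂s)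
      have base : ∀ g : Ω → ℝ, StronglyMeasurable[mG] g → Integrable g μ →
          ∫ x in s₁ ∩ s₂, g x ∂μ = (∫ x in s₁, g x ∂μ) * (μ s₂).toReal := by
        intro g hgm hgi
        have hum : Measurable[mG] (s₁.indicator g) :=
          Measurable.indicator hgm.measurable (h₁G _ h₁s)
        have hvm : Measurable[m₂] (s₂.indicator (fun _ => (1:ℝ))) :=
          Measurable.indicator measurable_const h₂s
        have hIF : IndepFun (s₁.indicator g) (s₂.indicator (fun _ => (1:ℝ))) μ := by
          rw [IndepFun_iff_Indep]
          exact indep_of_indep_of_le_right (indep_of_indep_of_le_left hindep hum.comap_le)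
            hvm.comap_le
        have hmul := hIF.integral_mul_eq_mul_integral
          ((hum.mono hG le_rfl).aestronglyMeasurable)
          ((hvm.mono h₂ le_rfl).aestronglyMeasurable)
        have huv : s₁.indicator g * s₂.indicator (fun _ => (1:ℝ)) = (s₁ ∩ s₂).indicator g := by
          funext x
          by_cases hx1 : x ∈ s₁ <;> by_cases hx2 : x ∈ s₂ <;>
            simp [Set.indicator_apply, hx1, hx2]
        calc ∫ x in s₁ ∩ s₂, g x ∂μ = ∫ x, (s₁ ∩ s₂).indicator g x ∂μ :=
              (integral_indicator hms).symm
          _ = ∫ x, (s₁.indicator g * s₂.indicator (fun _ => (1:ℝ))) x ∂μ := by rw [huv]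
          _ = (∫ x, s₁.indicator g x ∂μ) * ∫ x, s₂.indicator (fun _ => (1:ℝ)) x ∂μ := hmul
          _ = (∫ x in s₁, g x ∂μ) * (μ s₂).toReal := by
              rw [integral_indicator (hG _ (h₁G _ h₁s)), integral_indicator_const _ (h₂ _ h₂s)]
              simp [measureReal_def]
      rw [base f hf hfi, base _ (stronglyMeasurable_condExp.mono h₁G) integrable_condExp,
        setIntegral_condExp h₁ hfi h₁s]
    · intro t ht hC
      have ht0 : MeasurableSet t := hm _ ht
      have e1 := integral_add_compl ht0 hfi
      have e2 := integral_add_compl ht0 (integrable_condExp (f := f) (m := m₁) (μ := μ))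
      have e3 : ∫ x, (μ[f|m₁]) x ∂μ = ∫ x, f x ∂μ := integral_condExp (μ := μ) (f := f) h₁
      linarith
    · intro g hd hmeas hC
      rw [integral_iUnion (fun i => hm _ (hmeas i)) hd hfi.integrableOn,
        integral_iUnion (fun i => hm _ (hmeas i)) hd integrable_condExp.integrableOn]
      exact tsum_congr fun i => hC i
  exact (key hs).symm

/-- Coordinate of a vector-valued conditional expectation. -/
lemma condexp_pi_apply {Ω : Type*} {m : MeasurableSpace Ω} {m0 : MeasurableSpace Ω}
    {μ : Measure Ω} [IsProbabilityMeasure μ] (hm : m ≤ m0) {N : ℕ}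
    {f : Ω → Fin N → ℝ} (hfi : Integrable f μ) (r : Fin N) :
    (fun ω => (μ[f|m]) ω r) =ᵐ[μ] μ[fun ω => f ω r|m] := by
  have L : (Fin N → ℝ) →L[ℝ] ℝ := ContinuousLinearMap.proj r
  refine ae_eq_condExp_of_forall_setIntegral_eq hm
    ((ContinuousLinearMap.proj (R := ℝ) (φ := fun _ : Fin N => ℝ) r).integrable_comp hfi)
    (fun s _ _ => ((ContinuousLinearMap.proj (R := ℝ) (φ := fun _ : Fin N => ℝ)
      r).integrable_comp integrable_condExp).integrableOn) (fun s hs _ => ?_) ?_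
  · have h1 := (ContinuousLinearMap.proj (R := ℝ) (φ := fun _ : Fin N => ℝ)
      r).integral_comp_comm ((integrable_condExp (μ := μ) (f := f) (m := m)).integrableOn (s := s))
    have h2 := (ContinuousLinearMap.proj (R := ℝ) (φ := fun _ : Fin N => ℝ)
      r).integral_comp_comm (hfi.integrableOn (s := s))
    simp only [ContinuousLinearMap.proj_apply] at h1 h2
    rw [h1, h2, setIntegral_condExp hm hfi hs]
  · exact ((continuous_apply r).comp_stronglyMeasurable
      (stronglyMeasurable_condExp (m := m) (μ := μ) (f := f))).aestronglyMeasurable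

lemma inner_gauss {B : Set ℝ} (hB : MeasurableSet B) {m s : ℝ} (hs : 0 < s) :
    ∫⁻ e, ENNReal.ofReal (s * stdPDF (m + s * e) / stdPDF e) *
      B.indicator (fun _ => (1:ℝ≥0∞)) (m + s * e) ∂(gaussianReal 0 1)
    = gaussianReal 0 1 B := by
  have hmeas_aff : Measurable (fun e : ℝ => m + s * e) :=
    (measurable_const_mul s).const_add m
  have hh : Measurable (fun y : ℝ => ENNReal.ofReal (s * stdPDF y) *
      B.indicator (fun _ => (1:ℝ≥0∞)) y) := by
    exact ((measurable_const.mul measurable_stdPDF).ennreal_ofReal).mul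
      (measurable_one.indicator hB)
  have hg : Measurable (fun e : ℝ => ENNReal.ofReal (s * stdPDF (m + s * e) / stdPDF e) *
      B.indicator (fun _ => (1:ℝ≥0∞)) (m + s * e)) := by
    exact (((measurable_const.mul (measurable_stdPDF.comp hmeas_aff)).div
      measurable_stdPDF).ennreal_ofReal).mul ((measurable_one.indicator hB).comp hmeas_aff)
  rw [gaussianReal_of_var_ne_zero 0 one_ne_zero,
    lintegral_withDensity_eq_lintegral_mul _ (measurable_gaussianPDF 0 1) hg]
  have hptwise : ∀ e : ℝ, (gaussianPDF 0 1 * fun e =>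
      ENNReal.ofReal (s * stdPDF (m + s * e) / stdPDF e) *
        B.indicator (fun _ => (1:ℝ≥0∞)) (m + s * e)) e
      = (fun y => ENNReal.ofReal (s * stdPDF y) *
          B.indicator (fun _ => (1:ℝ≥0∞)) y) (m + s * e) := by
    intro e
    simp only [Pi.mul_apply, gaussianPDF, stdPDF_eq_gaussian]
    rw [← mul_assoc, ← ENNReal.ofReal_mul (stdPDF_pos e).le, mul_comm (stdPDF e),
      div_mul_cancel₀ _ (stdPDF_pos e).ne']
  rw [lintegral_congr hptwise, ← lintegral_map hh hmeas_aff]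
  have hmap : volume.map (fun e : ℝ => m + s * e) = ENNReal.ofReal s⁻¹ • volume := by
    have hcomp : (fun e : ℝ => m + s * e) = (fun x : ℝ => m + x) ∘ (fun e : ℝ => s * e) := rfl
    rw [hcomp, ← Measure.map_map (measurable_const_add m) (measurable_const_mul s),
      Real.map_volume_mul_left hs.ne', Measure.map_smul, map_add_left_eq_self,
      abs_of_pos (inv_pos.mpr hs)]
  rw [hmap, lintegral_smul_measure]
  have h2 : ∫⁻ y, ENNReal.ofReal (s * stdPDF y) * B.indicator (fun _ => (1:ℝ≥0∞)) y
      = ENNReal.ofReal s * gaussianReal 0 1 B := by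
    rw [gaussianReal_apply 0 one_ne_zero B]
    have : ∀ y : ℝ, ENNReal.ofReal (s * stdPDF y) * B.indicator (fun _ => (1:ℝ≥0∞)) y
        = ENNReal.ofReal s * B.indicator (fun y => ENNReal.ofReal (stdPDF y)) y := by
      intro y
      by_cases hy : y ∈ B <;>
        simp [hy, Set.indicator_of_mem, Set.indicator_of_notMem, ENNReal.ofReal_mul hs.le,
          mul_assoc]
    rw [lintegral_congr this, lintegral_const_mul _ (measurable_stdPDF.ennreal_ofReal.indicator hB),
      lintegral_indicator hB _]
    congr 1
    refine setLIntegral_congr_fun hB (fun y _ => ?_)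
    rw [gaussianPDF, stdPDF_eq_gaussian]
  rw [h2, smul_eq_mul, ← mul_assoc, ← ENNReal.ofReal_mul (inv_nonneg.mpr hs.le),
    inv_mul_cancel₀ hs.ne', ENNReal.ofReal_one, one_mul, gaussianReal_of_var_ne_zero 0 one_ne_zero]

section BarInter
variable {Ω : Type*} [mΩ : MeasurableSpace Ω] {N p : ℕ}
  {P Pbar : Measure Ω} [IsProbabilityMeasure P] [IsProbabilityMeasure Pbar]
  {X : ℕ → Ω → Fin N → ℝ} {Y : ℤ → Ω → ℝ} {ε : ℕ → Ω → ℝ}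
  {F : Fin N → (Fin p → ℝ) → ℝ} {σv : Fin N → ℝ}

lemma bar_inter
    (hXm : ∀ t, Measurable (X t)) (hYm : ∀ s, Measurable (Y s)) (hεm : ∀ t, Measurable (ε t))
    (hσ : ∀ i, 0 < σv i)
    (hFaff : ∀ i, ∃ (L : (Fin p → ℝ) →ₗ[ℝ] ℝ) (c : ℝ), ∀ v, F i v = L v + c)
    (hXb : ∀ t ω, ∃ i, X t ω = Pi.single i 1)
    (hdyn : ∀ (t : ℕ) (ω : Ω), Y ((t : ℤ) + 1) ω =
      (∑ i, X t ω i * F i (past Y p ((t : ℤ)) ω)) + (∑ i, X t ω i * σv i) * ε (t + 1) ω)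
    (hεlaw : ∀ t : ℕ, Measure.map (ε (t + 1)) P = gaussianReal 0 1)
    (hεindep : ∀ t : ℕ,
      Indep (MeasurableSpace.comap (ε (t + 1)) inferInstance) (sigG X Y t) P)
    (hPbar : ∀ (t : ℕ) (s : Set Ω), MeasurableSet[sigG X Y t] s →
      Pbar s = ∫⁻ ω in s, ENNReal.ofReal (Lam X Y ε σv t ω) ∂P)
    (t : ℕ) {D : Set Ω} (hD : MeasurableSet[sigG X Y t] D)
    {B : Set ℝ} (hB : MeasurableSet B) :
    Pbar (D ∩ Y ((t : ℤ) + 1) ⁻¹' B) = Pbar D * gaussianReal 0 1 B := by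
  have hGle : sigG X Y t ≤ mΩ := sigG_le hXm hYm t
  have hGle1 : sigG X Y (t + 1) ≤ mΩ := sigG_le hXm hYm (t + 1)
  -- the set is 𝒢_{t+1}-measurable
  have hYpre : MeasurableSet[sigG X Y (t + 1)] (Y ((t : ℤ) + 1) ⁻¹' B) := by
    have h1 : MeasurableSpace.comap (Y ((t : ℤ) + 1)) inferInstance ≤ sigG X Y (t + 1) :=
      (comap_le_sigY (by push_cast; omega)).trans le_sup_right
    exact h1 _ ⟨B, hB, rfl⟩
  have hDE : MeasurableSet[sigG X Y (t + 1)] (D ∩ Y ((t : ℤ) + 1) ⁻¹' B) :=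
    (sigG_mono (Nat.le_succ t) _ hD).inter hYpre
  -- 𝒢_t-measurable data
  set cD : Ω → ℝ := D.indicator (LamY X Y F σv t) with hcD
  set mfun : Ω → ℝ := fun ω => ∑ i, X t ω i * F i (past Y p (t : ℤ) ω) with hmfun
  set sfun : Ω → ℝ := fun ω => ∑ i, X t ω i * σv i with hsfun
  set U : Ω → ℝ × ℝ × ℝ := fun ω => (cD ω, mfun ω, sfun ω) with hU
  have hmfunG : Measurable[sigG X Y t] mfun := by
    letI : MeasurableSpace Ω := sigG X Y t
    refine Finset.measurable_sum _ fun i _ => ?_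
    exact ((measurable_pi_apply i).comp (measurable_X_sigG le_rfl)).mul
      ((continuous_F hFaff i).measurable.comp
        ((measurable_past_sigY (t := t)).mono le_sup_right le_rfl))
  have hsfunG : Measurable[sigG X Y t] sfun := by
    letI : MeasurableSpace Ω := sigG X Y t
    exact Finset.measurable_sum _ fun i _ =>
      ((measurable_pi_apply i).comp (measurable_X_sigG le_rfl)).mul measurable_const
  have hcDG : Measurable[sigG X Y t] cD :=
    (measurable_LamY hFaff t).indicator hD
  have hUG : Measurable[sigG X Y t] U := by
    letI : MeasurableSpace Ω := sigG X Y t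
    exact hcDG.prodMk (hmfunG.prodMk hsfunG)
  have hUm : Measurable U := hUG.mono hGle le_rfl
  -- the kernel function K
  set K : (ℝ × ℝ × ℝ) × ℝ → ℝ≥0∞ := fun q =>
    ENNReal.ofReal q.1.1 *
      (ENNReal.ofReal (q.1.2.2 * stdPDF (q.1.2.1 + q.1.2.2 * q.2) / stdPDF q.2) *
        B.indicator (fun _ => (1:ℝ≥0∞)) (q.1.2.1 + q.1.2.2 * q.2)) with hK
  have haff : Measurable fun q : (ℝ × ℝ × ℝ) × ℝ => q.1.2.1 + q.1.2.2 * q.2 :=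
    (measurable_fst.snd.fst).add ((measurable_fst.snd.snd).mul measurable_snd)
  have hKm : Measurable K := by
    refine (measurable_fst.fst.ennreal_ofReal).mul (Measurable.mul ?_ ?_)
    · exact (((measurable_fst.snd.snd).mul (measurable_stdPDF.comp haff)).div
        (measurable_stdPDF.comp measurable_snd)).ennreal_ofReal
    · exact (measurable_one.indicator hB).comp haff
  -- pointwise identity
  have hpt : ∀ ω, (D ∩ Y ((t : ℤ) + 1) ⁻¹' B).indicator
      (fun ω => ENNReal.ofReal (Lam X Y ε σv (t + 1) ω)) ω = K (U ω, ε (t + 1) ω) := by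
    intro ω
    have hYeq : Y ((t : ℤ) + 1) ω = mfun ω + sfun ω * ε (t + 1) ω := hdyn t ω
    have hLsucc : Lam X Y ε σv (t + 1) ω = Lam X Y ε σv t ω *
        (sfun ω * stdPDF (Y ((t : ℤ) + 1) ω) / stdPDF (ε (t + 1) ω)) := by
      have hss : (∑ j, σv j * X t ω j) = sfun ω := by
        obtain ⟨i, hi⟩ := hXb t ω
        simp [hsfun, hi, Pi.single_apply, mul_ite, ite_mul, mul_one, one_mul,
          mul_zero, zero_mul]
      unfold Lam
      rw [Finset.prod_range_succ, hss]
    by_cases hDmem : ω ∈ D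
    · have hcDval : cD ω = Lam X Y ε σv t ω := by
        rw [hcD, Set.indicator_of_mem hDmem, LamY_eq hσ hXb hdyn]
      by_cases hBmem : Y ((t : ℤ) + 1) ω ∈ B
      · rw [Set.indicator_of_mem (Set.mem_inter hDmem hBmem)]
        simp only [hK, hcDval]
        rw [← hYeq, Set.indicator_of_mem hBmem, mul_one, hLsucc,
          ENNReal.ofReal_mul (Lam_pos hσ hXb t ω).le]
        simp only [hU, hcDval]
      · rw [Set.indicator_of_notMem (fun h => hBmem h.2)]
        simp only [hK]
        rw [← hYeq, Set.indicator_of_notMem hBmem, mul_zero, mul_zero]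
    · rw [Set.indicator_of_notMem (fun h => hDmem h.1)]
      simp only [hK, hU, hcD, Set.indicator_of_notMem hDmem]
      rw [ENNReal.ofReal_zero, zero_mul]
  -- independence of U and ε_{t+1} under P
  have hIF : IndepFun U (ε (t + 1)) P := by
    rw [IndepFun_iff_Indep]
    exact indep_of_indep_of_le_left ((hεindep t).symm) hUG.comap_le
  have hmapprod : P.map (fun ω => (U ω, ε (t + 1) ω)) =
      (P.map U).prod (P.map (ε (t + 1))) :=
    (indepFun_iff_map_prod_eq_prod_map_map hUm.aemeasurable (hεm _).aemeasurable).mp hIF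
  haveI : IsProbabilityMeasure (P.map U) := Measure.isProbabilityMeasure_map hUm.aemeasurable
  haveI : IsProbabilityMeasure (P.map (ε (t + 1))) :=
    Measure.isProbabilityMeasure_map (hεm _).aemeasurable
  -- main computation
  calc Pbar (D ∩ Y ((t : ℤ) + 1) ⁻¹' B)
      = ∫⁻ ω in (D ∩ Y ((t : ℤ) + 1) ⁻¹' B), ENNReal.ofReal (Lam X Y ε σv (t + 1) ω) ∂P :=
        hPbar (t + 1) _ hDE
    _ = ∫⁻ ω, (D ∩ Y ((t : ℤ) + 1) ⁻¹' B).indicator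
          (fun ω => ENNReal.ofReal (Lam X Y ε σv (t + 1) ω)) ω ∂P :=
        (lintegral_indicator (hGle1 _ hDE) _).symm
    _ = ∫⁻ ω, K (U ω, ε (t + 1) ω) ∂P := lintegral_congr hpt
    _ = ∫⁻ q, K q ∂(P.map (fun ω => (U ω, ε (t + 1) ω))) :=
        (lintegral_map hKm (hUm.prodMk (hεm _))).symm
    _ = ∫⁻ u, ∫⁻ e, K (u, e) ∂(P.map (ε (t + 1))) ∂(P.map U) := by
        rw [hmapprod, lintegral_prod _ hKm.aemeasurable]
    _ = ∫⁻ u, ∫⁻ e, K (u, e) ∂(gaussianReal 0 1) ∂(P.map U) := by rw [hεlaw t]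
    _ = ∫⁻ u, ENNReal.ofReal u.1 * gaussianReal 0 1 B ∂(P.map U) := by
        refine lintegral_congr_ae ?_
        have hspos : ∀ᵐ u ∂(P.map U), 0 < u.2.2 := by
          rw [ae_map_iff hUm.aemeasurable (measurableSet_lt measurable_const
            measurable_snd.snd)]
          exact Filter.Eventually.of_forall fun ω => sfun_pos hσ hXb t ω
        filter_upwards [hspos] with u hu
        rw [hK]
        simp only
        rw [lintegral_const_mul _ (by
          exact ((((measurable_const.mul (measurable_stdPDF.comp
            ((measurable_const.add (measurable_const.mul measurable_id))))).div
            measurable_stdPDF).ennreal_ofReal).mul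
            ((measurable_one.indicator hB).comp
              ((measurable_const.add (measurable_const.mul measurable_id))))) )]
        rw [inner_gauss hB hu]
    _ = (∫⁻ u, ENNReal.ofReal u.1 ∂(P.map U)) * gaussianReal 0 1 B := by
        rw [lintegral_mul_const _ (measurable_fst.ennreal_ofReal)]
    _ = (∫⁻ ω, ENNReal.ofReal (cD ω) ∂P) * gaussianReal 0 1 B := by
        rw [lintegral_map (measurable_fst.ennreal_ofReal) hUm]
    _ = (∫⁻ ω in D, ENNReal.ofReal (Lam X Y ε σv t ω) ∂P) * gaussianReal 0 1 B := by
        congr 1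
        rw [← lintegral_indicator (hGle _ hD)]
        refine lintegral_congr fun ω => ?_
        by_cases hDmem : ω ∈ D
        · rw [hcD, Set.indicator_of_mem hDmem, Set.indicator_of_mem hDmem,
            LamY_eq hσ hXb hdyn]
        · rw [hcD, Set.indicator_of_notMem hDmem, Set.indicator_of_notMem hDmem,
            ENNReal.ofReal_zero]
    _ = Pbar D * gaussianReal 0 1 B := by rw [← hPbar t D hD]
end BarInter

section Main
variable {Ω : Type*} [mΩ : MeasurableSpace Ω] {N p : ℕ}
  {P Pbar : Measure Ω} [IsProbabilityMeasure P] [IsProbabilityMeasure Pbar]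
  {X : ℕ → Ω → Fin N → ℝ} {Y : ℤ → Ω → ℝ} {ε : ℕ → Ω → ℝ}
  {F : Fin N → (Fin p → ℝ) → ℝ} {σv : Fin N → ℝ}

lemma indep_bar
    (hXm : ∀ t, Measurable (X t)) (hYm : ∀ s, Measurable (Y s)) (hεm : ∀ t, Measurable (ε t))
    (hσ : ∀ i, 0 < σv i)
    (hFaff : ∀ i, ∃ (L : (Fin p → ℝ) →ₗ[ℝ] ℝ) (c : ℝ), ∀ v, F i v = L v + c)
    (hXb : ∀ t ω, ∃ i, X t ω = Pi.single i 1)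
    (hdyn : ∀ (t : ℕ) (ω : Ω), Y ((t : ℤ) + 1) ω =
      (∑ i, X t ω i * F i (past Y p ((t : ℤ)) ω)) + (∑ i, X t ω i * σv i) * ε (t + 1) ω)
    (hεlaw : ∀ t : ℕ, Measure.map (ε (t + 1)) P = gaussianReal 0 1)
    (hεindep : ∀ t : ℕ,
      Indep (MeasurableSpace.comap (ε (t + 1)) inferInstance) (sigG X Y t) P)
    (hPbar : ∀ (t : ℕ) (s : Set Ω), MeasurableSet[sigG X Y t] s →
      Pbar s = ∫⁻ ω in s, ENNReal.ofReal (Lam X Y ε σv t ω) ∂P)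
    (t : ℕ) :
    Indep (sigG X Y t) (MeasurableSpace.comap (Y ((t : ℤ) + 1)) inferInstance) Pbar := by
  rw [Indep_iff]
  rintro t1 t2 h1 ⟨B, hB, rfl⟩
  have hmain := bar_inter hXm hYm hεm hσ hFaff hXb hdyn hεlaw hεindep hPbar t h1 hB
  have huniv := bar_inter hXm hYm hεm hσ hFaff hXb hdyn hεlaw hεindep hPbar t
    (MeasurableSet.univ (α := Ω)) hB
  rw [Set.univ_inter, measure_univ, one_mul] at huniv
  rw [hmain, huniv]
end Main

end AuxHMM

/-- For a scalar `𝒢`-adapted integrable process `(H_t)`, `P̄`-a.s.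
`Ē[Λ̄_{t+1} H_t ⟨X_t, e_r⟩ | 𝒴_{t+1}] = ⟨γ_t(H_t X_t), Γ^r(Y_{t+1})⟩` and, summing over `r`,
`Ē[Λ̄_{t+1} H_t | 𝒴_{t+1}] = Σ_i ⟨γ_t(H_t X_t), Γ^i(Y_{t+1})⟩`. -/
theorem condexp_density_shift
    {Ω : Type*} [MeasurableSpace Ω] (P Pbar : Measure Ω)
    [IsProbabilityMeasure P] [IsProbabilityMeasure Pbar]
    {N p : ℕ}
    (X : ℕ → Ω → Fin N → ℝ) (Y : ℤ → Ω → ℝ) (ε : ℕ → Ω → ℝ)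
    (A : Matrix (Fin N) (Fin N) ℝ) (F : Fin N → (Fin p → ℝ) → ℝ) (σv : Fin N → ℝ)
    -- measurability of the processes
    (hXm : ∀ t, Measurable (X t)) (hYm : ∀ s, Measurable (Y s)) (hεm : ∀ t, Measurable (ε t))
    -- the noise variances are positive
    (hσ : ∀ i, 0 < σv i)
    -- the regression functions are affine
    (hFaff : ∀ i, ∃ (L : (Fin p → ℝ) →ₗ[ℝ] ℝ) (c : ℝ), ∀ v, F i v = L v + c)
    -- the hidden chain takes values in the standard basis vectors of ℝ^N
    (hXb : ∀ t ω, ∃ i, X t ω = Pi.single i 1)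
    -- (X_t) is a Markov chain with transition matrix A (a_{ij} = P(X_{t+1}=e_i | X_t=e_j))
    (hMarkov : ∀ t : ℕ,
      P[fun ω => X (t + 1) ω | sigG X Y t] =ᵐ[P] fun ω => A.mulVec (X t ω))
    -- dynamics : Y_{t+1} = F_{X_t}(Y_{t−p+1},…,Y_t) + σ_{X_t} ε_{t+1}
    (hdyn : ∀ (t : ℕ) (ω : Ω), Y ((t : ℤ) + 1) ω =
      (∑ i, X t ω i * F i (past Y p ((t : ℤ)) ω)) + (∑ i, X t ω i * σv i) * ε (t + 1) ω)
    -- the ε's are i.i.d. standard Gaussian, ε_{t+1} independent of 𝒢_t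
    (hεlaw : ∀ t : ℕ, Measure.map (ε (t + 1)) P = gaussianReal 0 1)
    (hεindep : ∀ t : ℕ,
      Indep (MeasurableSpace.comap (ε (t + 1)) inferInstance) (sigG X Y t) P)
    (hεiid : iIndepFun (fun t : ℕ => ε (t + 1)) P)
    -- P̄ is the measure whose Radon–Nikodym derivative restricted to 𝒢_t equals Λ_t
    (hPbar : ∀ (t : ℕ) (s : Set Ω), MeasurableSet[sigG X Y t] s →
      Pbar s = ∫⁻ ω in s, ENNReal.ofReal (Lam X Y ε σv t ω) ∂P)
    (H : ℕ → Ω → ℝ)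
    (hHadapt : ∀ t, Measurable[sigG X Y t] (H t))
    (hHint : ∀ t : ℕ, Integrable (H t) Pbar)
    (hint : ∀ t s : ℕ, Integrable (fun ω => (Lam X Y ε σv s ω)⁻¹ * H t ω) Pbar) :
    ∀ (t : ℕ) (r : Fin N),
      (Pbar[fun ω => (Lam X Y ε σv (t + 1) ω)⁻¹ * H t ω * X t ω r | sigY Y (t + 1)]
        =ᵐ[Pbar] fun ω =>
          ((Pbar[fun ω' => ((Lam X Y ε σv t ω')⁻¹ * H t ω') • X t ω' | sigY Y t]) ω r) * Gam Y F σv r t ω)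
      ∧
      (Pbar[fun ω => (Lam X Y ε σv (t + 1) ω)⁻¹ * H t ω | sigY Y (t + 1)]
        =ᵐ[Pbar] fun ω =>
          ∑ i : Fin N, ((Pbar[fun ω' => ((Lam X Y ε σv t ω')⁻¹ * H t ω') • X t ω' | sigY Y t]) ω i) * Gam Y F σv i t ω) := by
  intro t
  have hGle : sigG X Y t ≤ ‹MeasurableSpace Ω› := sigG_le hXm hYm t
  have hXbd : ∀ (r : Fin N) (ω : Ω), ‖X t ω r‖ ≤ 1 := by
    intro r ω
    obtain ⟨i, hi⟩ := hXb t ω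
    rw [Real.norm_eq_abs, hi, Pi.single_apply]
    split <;> norm_num
  -- the vector-valued process and its conditional expectation
  set Fpi : Ω → Fin N → ℝ := fun ω' => ((Lam X Y ε σv t ω')⁻¹ * H t ω') • X t ω' with hFpi
  have hHm : Measurable (H t) := (hHadapt t).mono hGle le_rfl
  have hcm : Measurable (fun ω => (Lam X Y ε σv t ω)⁻¹ * H t ω) :=
    (measurable_Lam hXm hYm hεm t).inv.mul hHm
  have hFpim : Measurable Fpi := by
    refine measurable_pi_lambda _ fun i => ?_
    exact hcm.mul ((hXm t).eval)
  have hPiInt : Integrable Fpi Pbar := by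
    refine Integrable.mono' (hint t t).norm hFpim.aestronglyMeasurable
      (Filter.Eventually.of_forall fun ω => ?_)
    rw [hFpi]
    simp only
    rw [norm_smul]
    have hXn : ‖X t ω‖ ≤ 1 := by
      rw [pi_norm_le_iff_of_nonneg zero_le_one]
      exact fun i => hXbd i ω
    calc ‖(Lam X Y ε σv t ω)⁻¹ * H t ω‖ * ‖X t ω‖
        ≤ ‖(Lam X Y ε σv t ω)⁻¹ * H t ω‖ * 1 := by
          exact mul_le_mul_of_nonneg_left hXn (norm_nonneg _)
      _ = ‖(Lam X Y ε σv t ω)⁻¹ * H t ω‖ := mul_one _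
  -- part 1, for every r
  have hpart1 : ∀ r : Fin N,
      Pbar[fun ω => (Lam X Y ε σv (t + 1) ω)⁻¹ * H t ω * X t ω r | sigY Y (t + 1)]
        =ᵐ[Pbar] fun ω => ((Pbar[Fpi | sigY Y t]) ω r) * Gam Y F σv r t ω := by
    intro r
    set W : Ω → ℝ := fun ω => (Lam X Y ε σv t ω)⁻¹ * H t ω * X t ω r with hW
    set G : Ω → ℝ := Gam Y F σv r t with hG
    have hWint : Integrable W Pbar := by
      refine ((hint t t).bdd_mul ((hXm t).eval).aestronglyMeasurable
        (ae_of_all _ fun ω => hXbd r ω)).congr ?_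
      exact Filter.Eventually.of_forall fun ω => by rw [hW]; simp only; ring
    have hWsm : StronglyMeasurable[sigG X Y t] W := by
      have hWeq : W = fun ω => (LamY X Y F σv t ω)⁻¹ * H t ω * X t ω r := by
        funext ω
        rw [hW]
        simp only
        rw [LamY_eq hσ hXb hdyn]
      rw [hWeq]
      letI : MeasurableSpace Ω := sigG X Y t
      exact (((measurable_LamY hFaff t).inv.mul (hHadapt t)).mul
        ((measurable_pi_apply r).comp (measurable_X_sigG le_rfl))).stronglyMeasurable
    have hfun1 : (fun ω => (Lam X Y ε σv (t + 1) ω)⁻¹ * H t ω * X t ω r) =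
        fun ω => G ω * W ω := by
      funext ω
      rw [key_pointwise hσ hXb hdyn (H t) t r ω, hW, hG]
      simp only
      ring
    have hf1int : Integrable (fun ω => (Lam X Y ε σv (t + 1) ω)⁻¹ * H t ω * X t ω r) Pbar := by
      refine ((hint t (t + 1)).bdd_mul ((hXm t).eval).aestronglyMeasurable
        (ae_of_all _ fun ω => hXbd r ω)).congr ?_
      exact Filter.Eventually.of_forall fun ω => by ring
    have hGWint : Integrable (fun ω => G ω * W ω) Pbar := hfun1 ▸ hf1int
    have hGsm : StronglyMeasurable[sigY Y (t + 1)] G := by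
      letI : MeasurableSpace Ω := sigY Y (t + 1)
      have hY1 : Measurable[sigY Y (t + 1)] (Y ((t : ℤ) + 1)) :=
        measurable_Y_sigY (by push_cast; omega)
      have hpast : Measurable[sigY Y (t + 1)] (past Y p (t : ℤ)) :=
        (measurable_past_sigY (t := t)).mono (sigY_mono (Nat.le_succ t)) le_rfl
      rw [hG]
      unfold Gam
      exact ((measurable_stdPDF.comp ((hY1.sub ((continuous_F hFaff r).measurable.comp
        hpast)).div measurable_const)).div
        (measurable_const.mul (measurable_stdPDF.comp hY1))).stronglyMeasurable
    have hmul := condExp_mul_of_stronglyMeasurable_left (μ := Pbar) hGsm hGWint hWint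
    have h3 : Pbar[W | sigY Y (t + 1)] =ᵐ[Pbar] Pbar[W | sigY Y t] := by
      rw [sigY_succ Y t]
      exact condexp_sup_indep hGle le_sup_right ((hYm _).comap_le) hWsm hWint
        (indep_bar hXm hYm hεm hσ hFaff hXb hdyn hεlaw hεindep hPbar t)
    have h4 : (fun ω => (Pbar[Fpi | sigY Y t]) ω r) =ᵐ[Pbar]
        Pbar[fun ω => Fpi ω r | sigY Y t] :=
      condexp_pi_apply (sigY_le hYm t) hPiInt r
    have hWr : (fun ω => Fpi ω r) = W := by
      funext ω
      rw [hFpi, hW]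
      simp [smul_eq_mul]
    rw [hWr] at h4
    rw [hfun1]
    refine hmul.trans ?_
    filter_upwards [h3, h4] with ω hω3 hω4
    rw [Pi.mul_apply, hω3, ← hω4, mul_comm]
  refine fun r => ⟨hpart1 r, ?_⟩
  -- part 2
  set f : Fin N → Ω → ℝ := fun r ω => (Lam X Y ε σv (t + 1) ω)⁻¹ * H t ω * X t ω r with hf
  have hfint : ∀ i ∈ Finset.univ (α := Fin N), Integrable (f i) Pbar := by
    intro i _
    refine ((hint t (t + 1)).bdd_mul ((hXm t).eval).aestronglyMeasurable
      (ae_of_all _ fun ω => hXbd i ω)).congr ?_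
    exact Filter.Eventually.of_forall fun ω => by rw [hf]; simp only; ring
  have hfun2 : (fun ω => (Lam X Y ε σv (t + 1) ω)⁻¹ * H t ω) = ∑ i, f i := by
    funext ω
    rw [Finset.sum_apply]
    exact sum_pointwise hXb (H t) t (fun ω => (Lam X Y ε σv (t + 1) ω)⁻¹) ω
  have hsum := condExp_finsetSum (μ := Pbar) (m := sigY Y (t + 1)) hfint
  have hall : ∀ᵐ ω ∂Pbar, ∀ i : Fin N,
      (Pbar[f i | sigY Y (t + 1)]) ω = ((Pbar[Fpi | sigY Y t]) ω i) * Gam Y F σv i t ω :=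
    (ae_all_iff).mpr fun i => hpart1 i
  rw [hfun2]
  refine hsum.trans ?_
  filter_upwards [hall] with ω hω
  rw [Finset.sum_apply]
  exact Finset.sum_congr rfl fun i _ => hω i
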